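/- Let l ∈ ℕ, (ρ,σ) ∈ 𝔙⁰ and let P, Q, R ∈ A₁⁽ˡ⁾ be nonzero with [P,Q]_{ρ,σ} = ℓ_{ρ,σ}(R). Then: (1) st_{ρ,σ}(P) × st_{ρ,σ}(Q) ≠ 0 if and only if st_{ρ,σ}(P) + st_{ρ,σ}(Q) − (1,1) = st_{ρ,σ}(R); (2) en_{ρ,σ}(P) × en_{ρ,σ}(Q) ≠ 0 if and only if en_{ρ,σ}(P) + en_{ρ,σ}(Q) − (1,1) = en_{ρ,σ}(R). -/

import Mathlib

open scoped BigOperators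
open scoped Classical

noncomputable section

namespace Dixmier

variable (K : Type*) [Field K] [CharZero K]

/-- Laurent polynomials `K[t,t⁻¹]`. -/
abbrev Laur (K : Type*) [Field K] := LaurentPolynomial K

/-- The `K`-linear endomorphisms of `K[t,t⁻¹]`. -/
abbrev E (K : Type*) [Field K] := Module.End K (Laur K)

/-- Multiplication by `t^i`, i.e. the element `X^{i/l}` of `A₁⁽ˡ⁾`. -/
def Xpow (i : ℤ) : E K := LinearMap.mulLeft K (LaurentPolynomial.T i)

/-- The operator `Y = (1/l)·t^{1-l}·d/dt` of `A₁⁽ˡ⁾`; it maps `t^n ↦ (n/l)·t^{n-l}`. -/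
def Yop (l : ℕ) : E K :=
  (Finsupp.linearCombination K fun n : ℤ =>
    algebraMap ℚ K ((n : ℚ) / (l : ℚ)) • LaurentPolynomial.T (n - (l : ℤ))) ∘ₗ
    (AddMonoidAlgebra.coeffLinearEquiv K).toLinearMap

/-- The algebra `A₁⁽ˡ⁾`: the subalgebra of endomorphisms of `K[t,t⁻¹]` generated by
multiplication by `t`, multiplication by `t⁻¹`, and `Y`. -/
def A1 (l : ℕ) : Subalgebra K (E K) :=
  Algebra.adjoin K {Xpow K 1, Xpow K (-1), Yop K l}

/-- The Weyl algebra `A₁`, identified with its copy inside `A₁⁽¹⁾`. -/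
def Weyl : Subalgebra K (E K) :=
  Algebra.adjoin K {Xpow K 1, Yop K 1}

/-- Interpretation of a coefficient family: `f ↦ ∑ f (i,j) • X^{i/l} Y^j`. -/
def toEnd (l : ℕ) : ((ℤ × ℕ) →₀ K) →ₗ[K] E K :=
  Finsupp.linearCombination K fun p : ℤ × ℕ => Xpow K p.1 * Yop K l ^ p.2

/-- The (unique) coefficient family representing `P ∈ A₁⁽ˡ⁾`. -/
def rep (l : ℕ) (P : E K) : (ℤ × ℕ) →₀ K :=
  if h : ∃ f, toEnd K l f = P then h.choose else 0

/-- The point `(i/l, j) ∈ ℚ²` attached to an exponent pair `(i,j)`. -/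
def pt (l : ℕ) (p : ℤ × ℕ) : ℚ × ℚ := ((p.1 : ℚ) / (l : ℚ), (p.2 : ℚ))

/-- The set of points `(i/l, j) ∈ ℚ²` in the support of a coefficient family. -/
def suppPts (l : ℕ) (f : (ℤ × ℕ) →₀ K) : Set (ℚ × ℚ) :=
  pt l '' (f.support : Set (ℤ × ℕ))

/-- The support of `P ∈ A₁⁽ˡ⁾`, as a subset of `(1/l)ℤ × ℕ₀ ⊆ ℚ²`. -/
def Supp (l : ℕ) (P : E K) : Set (ℚ × ℚ) := suppPts K l (rep K l P)

/-- `v_{ρ,σ}` on points of `ℚ²`. -/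
def vp (ρ σ : ℤ) (q : ℚ × ℚ) : ℚ := ρ * q.1 + σ * q.2

/-- `v_{ρ,σ}(P) ∈ WithBot ℚ` (with `v_{ρ,σ}(0) = ⊥ = -∞`). -/
def vdeg (ρ σ : ℤ) (l : ℕ) (P : E K) : WithBot ℚ :=
  (rep K l P).support.sup fun p => (vp ρ σ (pt l p) : WithBot ℚ)

/-- The coefficient family of the `(ρ,σ)`-leading part of `P`. -/
def ltRep (ρ σ : ℤ) (l : ℕ) (P : E K) : (ℤ × ℕ) →₀ K :=
  (rep K l P).filter fun p => (vp ρ σ (pt l p) : WithBot ℚ) = vdeg K ρ σ l P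

/-- The commutative algebra `L⁽ˡ⁾ = K[x^{1/l}, x^{-1/l}, y]`; the monomial `x^{i/l}·y^j`
corresponds to the exponent pair `(i,j) ∈ ℤ × ℕ`. -/
abbrev Lalg (K : Type*) [Field K] := AddMonoidAlgebra K (ℤ × ℕ)

/-- The `(ρ,σ)`-leading term `ℓ_{ρ,σ}(P) ∈ L⁽ˡ⁾`. -/
def ell (ρ σ : ℤ) (l : ℕ) (P : E K) : Lalg K := AddMonoidAlgebra.ofCoeff (ltRep K ρ σ l P)

/-- `R ∈ L⁽ˡ⁾` is `(ρ,σ)`-homogeneous: it is `0` or equal to its own leading term. -/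
def IsHomogL (ρ σ : ℤ) (l : ℕ) (R : Lalg K) : Prop :=
  ∀ p ∈ R.coeff.support, ∀ q ∈ R.coeff.support, vp ρ σ (pt l p) = vp ρ σ (pt l q)

/-- `F ∈ A₁⁽ˡ⁾` is `(ρ,σ)`-homogeneous. -/
def IsHomogE (ρ σ : ℤ) (l : ℕ) (F : E K) : Prop :=
  ∀ p ∈ (rep K l F).support, ∀ q ∈ (rep K l F).support,
    vp ρ σ (pt l p) = vp ρ σ (pt l q)

/-- `q` is the point of `Supp(ℓ_{ρ,σ}(P))` at which `v_{1,-1}` is maximal. -/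
def IsStOf (ρ σ : ℤ) (l : ℕ) (P : E K) (q : ℚ × ℚ) : Prop :=
  q ∈ suppPts K l (ltRep K ρ σ l P) ∧
    ∀ q' ∈ suppPts K l (ltRep K ρ σ l P), vp 1 (-1) q' ≤ vp 1 (-1) q

/-- `st_{ρ,σ}(P)`. -/
def stP (ρ σ : ℤ) (l : ℕ) (P : E K) : ℚ × ℚ :=
  if h : ∃ q, IsStOf K ρ σ l P q then h.choose else 0

/-- `q` is the point of `Supp(ℓ_{ρ,σ}(P))` at which `v_{-1,1}` is maximal. -/
def IsEnOf (ρ σ : ℤ) (l : ℕ) (P : E K) (q : ℚ × ℚ) : Prop :=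
  q ∈ suppPts K l (ltRep K ρ σ l P) ∧
    ∀ q' ∈ suppPts K l (ltRep K ρ σ l P), vp (-1) 1 q' ≤ vp (-1) 1 q

/-- `en_{ρ,σ}(P)`. -/
def enP (ρ σ : ℤ) (l : ℕ) (P : E K) : ℚ × ℚ :=
  if h : ∃ q, IsEnOf K ρ σ l P q then h.choose else 0

/-- `w(P)`: the point of `Supp(ℓ_{1,-1}(P))` with maximal first coordinate. -/
def IsWOf (l : ℕ) (P : E K) (q : ℚ × ℚ) : Prop :=
  q ∈ suppPts K l (ltRep K 1 (-1) l P) ∧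
    ∀ q' ∈ suppPts K l (ltRep K 1 (-1) l P), q'.1 ≤ q.1

def wP (l : ℕ) (P : E K) : ℚ × ℚ :=
  if h : ∃ q, IsWOf K l P q then h.choose else 0

/-- `w̄(P)`: the point of `Supp(ℓ_{-1,1}(P))` with maximal first coordinate. -/
def IsWBarOf (l : ℕ) (P : E K) (q : ℚ × ℚ) : Prop :=
  q ∈ suppPts K l (ltRep K (-1) 1 l P) ∧
    ∀ q' ∈ suppPts K l (ltRep K (-1) 1 l P), q'.1 ≤ q.1

def wBarP (l : ℕ) (P : E K) : ℚ × ℚ :=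
  if h : ∃ q, IsWBarOf K l P q then h.choose else 0

/-- The cross product `A × B` on `ℚ²`. -/
def cross (A B : ℚ × ℚ) : ℚ := A.1 * B.2 - A.2 * B.1

/-- The set of directions `𝔙̄`. -/
def VBar (ρ σ : ℤ) : Prop := Int.gcd ρ σ = 1 ∧ 0 ≤ ρ + σ

/-- The set of directions `𝔙`. -/
def V (ρ σ : ℤ) : Prop := Int.gcd ρ σ = 1 ∧ 0 < ρ + σ

/-- The set of directions `𝔙⁰`. -/
def V0 (ρ σ : ℤ) : Prop := V ρ σ ∧ 0 < ρ

/-- The order on directions: `(1,-1)` is smallest, `(-1,1)` is largest, and otherwise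
`(ρ,σ) < (ρ',σ')` iff `ρσ' - σρ' > 0`. -/
def dirLt (ρ σ ρ' σ' : ℤ) : Prop :=
  ((ρ, σ) = ((1 : ℤ), (-1 : ℤ)) ∧ (ρ', σ') = ((-1 : ℤ), (1 : ℤ))) ∨ 0 < ρ * σ' - σ * ρ'

/-- The commutator `[P,Q] = PQ - QP`. -/
def brk (P Q : E K) : E K := P * Q - Q * P

/-- `P` and `Q` are `(ρ,σ)`-proportional:
`v_{ρ,σ}([P,Q]) < v_{ρ,σ}(P) + v_{ρ,σ}(Q) - (ρ+σ)`. -/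
def Proportional (ρ σ : ℤ) (l : ℕ) (P Q : E K) : Prop :=
  vdeg K ρ σ l (brk K P Q) + (((ρ : ℚ) + (σ : ℚ) : ℚ) : WithBot ℚ)
    < vdeg K ρ σ l P + vdeg K ρ σ l Q

/-- The `(ρ,σ)`-bracket `[P,Q]_{ρ,σ} ∈ L⁽ˡ⁾`. -/
def rsBrk (ρ σ : ℤ) (l : ℕ) (P Q : E K) : Lalg K :=
  if Proportional K ρ σ l P Q then 0 else ell K ρ σ l (brk K P Q)

/-- `(ρ,σ) ∈ Dir(P)`. -/
def InDir (ρ σ : ℤ) (l : ℕ) (P : E K) : Prop :=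
  V ρ σ ∧ 1 < (ltRep K ρ σ l P).support.card

/-- `(ρ,σ) ∈ Dir̄(P)`. -/
def InDirBar (ρ σ : ℤ) (l : ℕ) (P : E K) : Prop :=
  InDir K ρ σ l P ∨ (ρ, σ) = ((1 : ℤ), (-1 : ℤ)) ∨ (ρ, σ) = ((-1 : ℤ), (1 : ℤ))

/-- The minimal second exponent occurring in a coefficient family. -/
def minSnd (f : (ℤ × ℕ) →₀ K) : ℕ :=
  if h : f.support.Nonempty then (f.support.image Prod.snd).min' (h.image _) else 0

/-- The univariate polynomial `f_{P,ρ,σ} ∈ K[x]`: writing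
`ℓ_{ρ,σ}(P) = ∑_{i=0}^{γ} a_i·x^{r/l - iσ/ρ}·y^{s+i}`, it is `∑ a_i·xⁱ`. -/
def fPol (ρ σ : ℤ) (l : ℕ) (P : E K) : Polynomial K :=
  ∑ p ∈ (ltRep K ρ σ l P).support,
    Polynomial.C (ltRep K ρ σ l P p) *
      Polynomial.X ^ (p.2 - minSnd K (ltRep K ρ σ l P))

/-- The total degree `v_{1,1}(P)` of an element of the Weyl algebra, as a natural number. -/
def tdeg (P : E K) : ℕ :=
  (rep K 1 P).support.sup fun p => p.1.toNat + p.2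

/-- `(P,Q)` is a counterexample to the Dixmier conjecture: `[Q,P] = 1` but `P` and `Q`
do not generate the Weyl algebra `A₁` over `K`. -/
def IsCounterexample (P Q : E K) : Prop :=
  P ∈ Weyl K ∧ Q ∈ Weyl K ∧ brk K Q P = 1 ∧ Algebra.adjoin K {P, Q} ≠ Weyl K

/-- A minimal pair: a counterexample minimizing `gcd(v_{1,1}(P), v_{1,1}(Q))`. -/
def IsMinimalPair (P Q : E K) : Prop :=
  IsCounterexample K P Q ∧
    ∀ P' Q' : E K, IsCounterexample K P' Q' →
      Nat.gcd (tdeg K P) (tdeg K Q) ≤ Nat.gcd (tdeg K P') (tdeg K Q')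

/-- `P` is subrectangular (with some vertex `(a,b) ∈ ℕ × ℕ`). -/
def Subrectangular (P : E K) : Prop :=
  ∃ a b : ℕ, 0 < a ∧ 0 < b ∧ ((a : ℚ), (b : ℚ)) ∈ Supp K 1 P ∧
    ∀ q ∈ Supp K 1 P, 0 ≤ q.1 ∧ q.1 ≤ (a : ℚ) ∧ 0 ≤ q.2 ∧ q.2 ≤ (b : ℚ)

/-- A standard minimal pair. -/
def IsStandardMinimalPair (P Q : E K) : Prop :=
  IsMinimalPair K P Q ∧ Subrectangular K P ∧ Subrectangular K Q ∧
    vp 1 (-1) (stP K 1 0 1 P) < 0 ∧ vp 1 (-1) (stP K 1 0 1 Q) < 0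

/-- The commutative algebra of "polynomials" with exponents in `ℚ²`, used to express
monomials such as `x^{r/l - iσ/ρ}·y^{s+i}`. -/
abbrev LQ (K : Type*) [Field K] := AddMonoidAlgebra K (ℚ × ℚ)

/-- The embedding of `L⁽ˡ⁾` into `LQ`, sending `x^{i/l}·y^j` to the monomial with
exponent `(i/l, j)`. -/
def toLQ (l : ℕ) (R : Lalg K) : LQ K := AddMonoidAlgebra.ofCoeff (Finsupp.mapDomain (pt l) R.coeff)

/-- The generalized binomial coefficient `binom(q,k) = q(q-1)⋯(q-k+1)/k!`. -/
def qchoose (q : ℚ) (k : ℕ) : ℚ :=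
  (∏ m ∈ Finset.range k, (q - (m : ℚ))) / (k.factorial : ℚ)

end Dixmier

end


namespace Dixmier

noncomputable section Aux
set_option linter.unusedSectionVars false
set_option maxHeartbeats 1000000
open LaurentPolynomial Finset
variable {K : Type*} [Field K] [CharZero K]

theorem endExt {F G : E K} (h : ∀ n : ℤ, F (T n) = G (T n)) : F = G := by
  apply AddMonoidAlgebra.lhom_ext'
  intro n
  apply LinearMap.ext
  intro b
  have hb : (AddMonoidAlgebra.lsingle (R := K) n b : Laur K) = b • T n := by
    rw [AddMonoidAlgebra.lsingle_apply, LaurentPolynomial.T, AddMonoidAlgebra.smul_single,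
      smul_eq_mul, mul_one]
  rw [LinearMap.comp_apply, LinearMap.comp_apply, hb, map_smul, map_smul]
  exact congrArg (fun z => b • z) (h n)

@[simp] theorem Xpow_T (i n : ℤ) : Xpow K i (T n) = T (i + n) := by
  rw [Xpow, LinearMap.mulLeft_apply, ← T_add]

@[simp] theorem Yop_T (l : ℕ) (n : ℤ) :
    Yop K l (T n) = algebraMap ℚ K ((n : ℚ) / (l : ℚ)) • T (n - (l : ℤ)) := by
  have : (T n : Laur K).coeff = Finsupp.single n 1 := rfl
  rw [Yop, LinearMap.comp_apply, LinearEquiv.coe_coe,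
    AddMonoidAlgebra.coeffLinearEquiv_apply, this]
  rw [Finsupp.linearCombination_single]
  rw [one_smul]

theorem Xpow_mul (i j : ℤ) : Xpow K i * Xpow K j = Xpow K (i + j) := by
  apply endExt
  intro n
  simp [Module.End.mul_apply, add_assoc]

@[simp] theorem Xpow_zero' : Xpow K 0 = 1 := by
  apply endExt; intro n
  simp [Module.End.one_apply]

/-- falling factorial of a rational -/
def ffall (a : ℚ) (k : ℕ) : ℚ := ∏ m ∈ Finset.range k, (a - m)

@[simp] theorem ffall_zero (a : ℚ) : ffall a 0 = 1 := rfl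
theorem ffall_succ (a : ℚ) (k : ℕ) : ffall a (k+1) = ffall a k * (a - k) :=
  Finset.prod_range_succ _ _
@[simp] theorem ffall_one (a : ℚ) : ffall a 1 = a := by
  rw [show (1:ℕ) = 0+1 from rfl, ffall_succ]; simp

theorem ffall_eq_smeval (a : ℚ) (k : ℕ) :
    ffall a k = Polynomial.smeval (descPochhammer ℤ k) a := by
  induction k with
  | zero => simp [descPochhammer_zero, Polynomial.smeval_one]
  | succ k ih =>
    rw [ffall_succ, ih, descPochhammer_succ_right, Polynomial.smeval_mul,
      Polynomial.smeval_sub, Polynomial.smeval_X, Polynomial.smeval_natCast]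
    simp [pow_one]

theorem vandermonde (x a : ℚ) (j : ℕ) :
    ffall (x + a) j
      = ∑ k ∈ Finset.range (j+1), (j.choose k : ℚ) * ffall a k * ffall x (j - k) := by
  have h := Ring.descPochhammer_smeval_add (R := ℚ) (r := a) (s := x) j (Commute.all a x)
  rw [← ffall_eq_smeval, add_comm a x] at h
  rw [h, Finset.Nat.sum_antidiagonal_eq_sum_range_succ_mk]
  refine Finset.sum_congr rfl fun k hk => ?_
  rw [← ffall_eq_smeval, ← ffall_eq_smeval]
  ring

theorem Yop_pow_T (l : ℕ) (hl : (l : ℚ) ≠ 0) (j : ℕ) (n : ℤ) :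
    (Yop K l ^ j) (T n) = algebraMap ℚ K (ffall ((n : ℚ)/(l : ℚ)) j) • T (n - j * l) := by
  induction j with
  | zero => simp [Module.End.one_apply]
  | succ j ih =>
    rw [pow_succ', Module.End.mul_apply, ih, map_smul, Yop_T, smul_smul, ← map_mul]
    congr 1
    · congr 1
      rw [ffall_succ]
      congr 1
      push_cast
      field_simp
    · congr 1
      push_cast
      ring

theorem Ypow_mul_Xpow (l : ℕ) (hl : (l:ℚ) ≠ 0) (j : ℕ) (i : ℤ) :
    Yop K l ^ j * Xpow K i = ∑ k ∈ range (j+1),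
      algebraMap ℚ K ((j.choose k : ℚ) * ffall ((i:ℚ)/l) k) •
        (Xpow K (i - k*l) * Yop K l ^ (j-k)) := by
  apply endExt; intro n
  rw [Module.End.mul_apply, Xpow_T, Yop_pow_T _ hl, LinearMap.sum_apply]
  have step : ∀ k ∈ range (j+1),
      (algebraMap ℚ K ((j.choose k : ℚ) * ffall ((i:ℚ)/l) k) •
        (Xpow K (i - k*l) * Yop K l ^ (j-k))) (T n)
      = algebraMap ℚ K ((j.choose k : ℚ) * ffall ((i:ℚ)/l) k * ffall ((n:ℚ)/l) (j-k))
          • T (i + n - j*l) := by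
    intro k hk
    have hkj : k ≤ j := Nat.lt_succ_iff.mp (Finset.mem_range.mp hk)
    rw [LinearMap.smul_apply, Module.End.mul_apply, Yop_pow_T _ hl, map_smul, Xpow_T,
      smul_smul, ← map_mul]
    congr 2
    have : ((j - k : ℕ) : ℤ) = (j:ℤ) - k := by omega
    rw [this]; ring
  rw [Finset.sum_congr rfl step, ← Finset.sum_smul, ← map_sum]
  congr 2
  have : ((i + n : ℤ):ℚ)/(l:ℚ) = (n:ℚ)/(l:ℚ) + (i:ℚ)/(l:ℚ) := by push_cast; ring
  rw [this, vandermonde]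

theorem mono_mul (l : ℕ) (hl : (l:ℚ) ≠ 0) (p q : ℤ × ℕ) :
    (Xpow K p.1 * Yop K l ^ p.2) * (Xpow K q.1 * Yop K l ^ q.2)
      = ∑ k ∈ range (p.2+1),
        algebraMap ℚ K ((p.2.choose k : ℚ) * ffall ((q.1:ℚ)/l) k) •
          (Xpow K (p.1 + q.1 - k*l) * Yop K l ^ (p.2 + q.2 - k)) := by
  have h1 : (Xpow K p.1 * Yop K l ^ p.2) * (Xpow K q.1 * Yop K l ^ q.2)
      = Xpow K p.1 * ((Yop K l ^ p.2 * Xpow K q.1) * Yop K l ^ q.2) := by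
    rw [mul_assoc, ← mul_assoc (Yop K l ^ p.2)]
  rw [h1, Ypow_mul_Xpow l hl, Finset.sum_mul, Finset.mul_sum]
  refine Finset.sum_congr rfl fun k hk => ?_
  have hkj : k ≤ p.2 := Nat.lt_succ_iff.mp (Finset.mem_range.mp hk)
  rw [smul_mul_assoc, mul_smul_comm]
  congr 1
  have h2 : p.2 - k + q.2 = p.2 + q.2 - k := by omega
  calc Xpow K p.1 * (Xpow K (q.1 - k*l) * Yop K l ^ (p.2-k) * Yop K l ^ q.2)
      = (Xpow K p.1 * Xpow K (q.1 - k*l)) * (Yop K l ^ (p.2-k) * Yop K l ^ q.2) := by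
        rw [mul_assoc (Xpow K (q.1 - k*l)), ← mul_assoc]
    _ = Xpow K (p.1 + q.1 - k*l) * Yop K l ^ (p.2 + q.2 - k) := by
        rw [Xpow_mul, ← pow_add, h2]
        congr 2
        ring

theorem toEnd_single (l : ℕ) (p : ℤ × ℕ) (c : K) :
    toEnd K l (Finsupp.single p c) = c • (Xpow K p.1 * Yop K l ^ p.2) := by
  rw [toEnd, Finsupp.linearCombination_single]

/-- exponent of the `k`-th term in the product of monomials `p`,`q`. -/
def eexp (l : ℕ) (p q : ℤ × ℕ) (k : ℕ) : ℤ × ℕ := (p.1 + q.1 - k*l, p.2 + q.2 - k)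

/-- coefficient of the `k`-th term. -/
def coefk (l : ℕ) (p q : ℤ × ℕ) (k : ℕ) : ℚ := (p.2.choose k : ℚ) * ffall ((q.1:ℚ)/l) k

/-- normal-form representation of the product. -/
def mulRep (l : ℕ) (f g : (ℤ × ℕ) →₀ K) : (ℤ × ℕ) →₀ K :=
  f.sum fun p a => g.sum fun q b => ∑ k ∈ range (p.2+1),
    Finsupp.single (eexp l p q k) (a * b * algebraMap ℚ K (coefk l p q k))

theorem toEnd_apply (l : ℕ) (f : (ℤ × ℕ) →₀ K) :
    toEnd K l f = f.sum fun p a => a • (Xpow K p.1 * Yop K l ^ p.2) :=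
  Finsupp.linearCombination_apply K f

theorem toEnd_mulRep (l : ℕ) (hl : (l:ℚ) ≠ 0) (f g : (ℤ × ℕ) →₀ K) :
    toEnd K l (mulRep l f g) = toEnd K l f * toEnd K l g := by
  rw [mulRep, map_finsuppSum]
  rw [toEnd_apply l f, toEnd_apply l g, Finsupp.sum_mul]
  refine Finsupp.sum_congr fun p hp => ?_
  rw [map_finsuppSum, Finsupp.mul_sum]
  refine Finsupp.sum_congr fun q hq => ?_
  rw [map_sum]
  have : ∀ k ∈ range (p.2+1), toEnd K l
      (Finsupp.single (eexp l p q k) (f p * g q * algebraMap ℚ K (coefk l p q k)))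
      = (f p * g q) • (algebraMap ℚ K (coefk l p q k) •
          (Xpow K (p.1 + q.1 - k*l) * Yop K l ^ (p.2 + q.2 - k))) := by
    intro k hk
    rw [toEnd_single, eexp, mul_smul, ← smul_smul]
  rw [Finset.sum_congr rfl this, ← Finset.smul_sum]
  simp only [coefk]
  rw [← mono_mul l hl p q, smul_mul_smul_comm]

theorem lin_indep (N : ℕ) (c : ℕ → K)
    (h : ∀ m : ℤ, ∑ j ∈ range N, c j * algebraMap ℚ K (ffall ((m:ℚ)) j) = 0) :
    ∀ j ∈ range N, c j = 0 := by
  by_contra hcon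
  push_neg at hcon
  obtain ⟨j1, hj1, hcj1⟩ := hcon
  set S := (range N).filter (fun j => c j ≠ 0) with hS
  have hSne : S.Nonempty := ⟨j1, Finset.mem_filter.mpr ⟨hj1, hcj1⟩⟩
  set J := S.max' hSne with hJ
  have hJS : J ∈ S := S.max'_mem hSne
  have hJN : J ∈ range N := (Finset.mem_filter.mp hJS).1
  have hcJ : c J ≠ 0 := (Finset.mem_filter.mp hJS).2
  set M : ℕ → Polynomial K := fun j => ∏ r ∈ range j, (Polynomial.X - Polynomial.C (r : K))
    with hM
  have hMmonic : ∀ j, (M j).Monic := fun j =>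
    Polynomial.monic_prod_of_monic _ _ fun r _ => Polynomial.monic_X_sub_C _
  have hMdeg : ∀ j, (M j).natDegree = j := by
    intro j
    rw [hM]
    rw [Polynomial.natDegree_prod _ _ (fun r _ => Polynomial.X_sub_C_ne_zero _)]
    simp only [Polynomial.natDegree_X_sub_C, Finset.sum_const, smul_eq_mul, mul_one,
      Finset.card_range]
  set Pl : Polynomial K := ∑ j ∈ range N, Polynomial.C (c j) * M j with hPl
  have hroot : ∀ m : ℤ, Pl.IsRoot ((m : K)) := by
    intro m
    have := h m
    rw [Polynomial.IsRoot, hPl, Polynomial.eval_finset_sum]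
    rw [← this]
    refine Finset.sum_congr rfl fun j hj => ?_
    rw [Polynomial.eval_mul, Polynomial.eval_C, hM]
    congr 1
    rw [Polynomial.eval_prod, ffall, map_prod]
    refine Finset.prod_congr rfl fun r hr => ?_
    rw [Polynomial.eval_sub, Polynomial.eval_X, Polynomial.eval_C, map_sub]
    congr 1
    · rw [map_intCast]
    · rw [map_natCast]
  have hPl0 : Pl = 0 := by
    refine Polynomial.eq_zero_of_infinite_isRoot _ ?_
    refine Set.Infinite.mono ?_ (Set.infinite_range_of_injective
      (fun a b hab => Int.cast_injective hab : Function.Injective (Int.cast : ℤ → K)))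
    rintro x ⟨m, rfl⟩
    exact hroot m
  have hcoeff : Pl.coeff J = c J := by
    rw [hPl, Polynomial.finset_sum_coeff]
    rw [Finset.sum_eq_single J]
    · rw [Polynomial.coeff_C_mul]
      have : (M J).coeff J = 1 := by
        have := (hMmonic J).leadingCoeff
        rwa [Polynomial.leadingCoeff, hMdeg J] at this
      rw [this, mul_one]
    · intro j hj hne
      rcases lt_or_gt_of_ne hne with hlt | hgt
      · -- j < J impossible? no: j < J means degree j < J so coeff J = 0
        rw [Polynomial.coeff_C_mul, Polynomial.coeff_eq_zero_of_natDegree_lt, mul_zero]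
        rw [hMdeg]; exact hlt
      · -- j > J: c j = 0 by maximality
        have : c j = 0 := by
          by_contra hc
          have : j ∈ S := Finset.mem_filter.mpr ⟨hj, hc⟩
          have := S.le_max' j this
          omega
        rw [this, Polynomial.C_0, zero_mul, Polynomial.coeff_zero]
    · intro h'; exact absurd hJN h'
  rw [hPl0, Polynomial.coeff_zero] at hcoeff
  exact hcJ hcoeff.symm

theorem toEnd_eq_zero (l : ℕ) (hl : (l:ℚ) ≠ 0) {f : (ℤ × ℕ) →₀ K}
    (hf : toEnd K l f = 0) : f = 0 := by
  by_contra hne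
  obtain ⟨p0, hp0⟩ : ∃ p0, f p0 ≠ 0 := by
    by_contra hh
    push_neg at hh
    exact hne (Finsupp.ext hh)
  have hp0s : p0 ∈ f.support := Finsupp.mem_support_iff.mpr hp0
  set d : ℤ := p0.1 - p0.2 * l with hd
  set N : ℕ := (f.support.sup Prod.snd) + 1 with hN
  have key : ∀ m : ℤ, ∑ j ∈ range N, f (d + j*l, j) * algebraMap ℚ K (ffall ((m:ℚ)) j) = 0 := by
    intro m
    set n : ℤ := m * l with hn
    set A : ℕ → K := fun j => algebraMap ℚ K (ffall ((n:ℚ)/l) j) with hA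
    have hterm : ∀ p ∈ f.support, ((f p • (Xpow K p.1 * Yop K l ^ p.2)) (T n)).coeff (n + d)
        = (if p.1 = d + p.2 * l then f p * A p.2 else 0) := by
      intro p _
      rw [LinearMap.smul_apply, Module.End.mul_apply, Yop_pow_T l hl, map_smul, Xpow_T]
      rw [AddMonoidAlgebra.coeff_smul_apply, AddMonoidAlgebra.coeff_smul_apply, LaurentPolynomial.T_apply]
      by_cases hcond : p.1 = d + p.2 * l
      · rw [if_pos hcond, if_pos (by omega), smul_eq_mul, smul_eq_mul, mul_one]
      · rw [if_neg hcond, if_neg (by omega), smul_eq_mul, smul_eq_mul, mul_zero, mul_zero]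
    have hexp : ((toEnd K l f) (T n)).coeff (n + d)
        = ∑ p ∈ f.support, ((f p • (Xpow K p.1 * Yop K l ^ p.2)) (T n)).coeff (n + d) := by
      rw [toEnd_apply, Finsupp.sum, LinearMap.sum_apply, AddMonoidAlgebra.coeff_sum, Finsupp.finset_sum_apply]
    have h1 : ((toEnd K l f) (T n)).coeff (n + d) = 0 := by rw [hf]; rfl
    rw [hexp, Finset.sum_congr rfl hterm] at h1
    have h8 : ∀ p ∈ f.support, (if p.1 = d + p.2 * l then f p * A p.2 else 0)
        = ∑ j ∈ range N, (if p = (d + j*l, j) then f p * A p.2 else 0) := by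
      intro p hp
      have hp2 : p.2 ∈ range N := by
        rw [hN, Finset.mem_range]
        have := Finset.le_sup (f := Prod.snd) hp
        omega
      rw [Finset.sum_eq_single_of_mem p.2 hp2]
      · by_cases hcond : p.1 = d + p.2*l
        · rw [if_pos hcond, if_pos (show p = (d + p.2*l, p.2) from Prod.ext hcond rfl)]
        · rw [if_neg hcond, if_neg (fun hc => hcond (congrArg Prod.fst hc))]
      · intro j _ hne'
        exact if_neg (fun hc => hne' ((congrArg Prod.snd hc).symm))
    rw [Finset.sum_congr rfl h8, Finset.sum_comm] at h1
    have h9 : ∀ j ∈ range N,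
        (∑ p ∈ f.support, if p = (d + j*l, j) then f p * A p.2 else 0) = f (d+j*l, j) * A j := by
      intro j _
      rw [Finset.sum_ite_eq' f.support ((d + j*l, j) : ℤ × ℕ) (fun p => f p * A p.2)]
      by_cases hmem : ((d+j*l, j) : ℤ × ℕ) ∈ f.support
      · rw [if_pos hmem]
      · rw [if_neg hmem, Finsupp.notMem_support_iff.mp hmem, zero_mul]
    rw [Finset.sum_congr rfl h9] at h1
    have hAm : ∀ j, A j = algebraMap ℚ K (ffall ((m:ℚ)) j) := by
      intro j
      rw [hA]
      congr 2
      rw [hn]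
      push_cast
      field_simp
    rw [Finset.sum_congr rfl (fun j _ => by rw [hAm j])] at h1
    exact h1
  have hz : f (d + (p0.2:ℤ)*l, p0.2) = 0 := lin_indep N (fun j => f (d + j*l, j)) key p0.2 (by
    rw [hN, Finset.mem_range]
    have := Finset.le_sup (f := Prod.snd) hp0s
    omega)
  have hp0eq : ((d + p0.2 * l, p0.2) : ℤ × ℕ) = p0 := Prod.ext (by omega) rfl
  rw [hp0eq] at hz
  exact hp0 hz

theorem toEnd_inj (l : ℕ) (hl : (l:ℚ) ≠ 0) : Function.Injective (toEnd K l) := by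
  intro a b hab
  have : toEnd K l (a - b) = 0 := by rw [map_sub, hab, sub_self]
  have := toEnd_eq_zero l hl this
  rwa [sub_eq_zero] at this

theorem rep_toEnd (l : ℕ) (hl : (l:ℚ) ≠ 0) (f : (ℤ × ℕ) →₀ K) :
    rep K l (toEnd K l f) = f := by
  rw [rep, dif_pos ⟨f, rfl⟩]
  exact toEnd_inj l hl (⟨f, rfl⟩ : ∃ g, toEnd K l g = toEnd K l f).choose_spec

/-- The range of `toEnd` as a subalgebra. -/
def rangeS (l : ℕ) (hl : (l:ℚ) ≠ 0) : Subalgebra K (E K) where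
  carrier := Set.range (toEnd K l)
  add_mem' := by rintro _ _ ⟨a, rfl⟩ ⟨b, rfl⟩; exact ⟨a + b, map_add _ _ _⟩
  mul_mem' := by rintro _ _ ⟨a, rfl⟩ ⟨b, rfl⟩; exact ⟨mulRep l a b, toEnd_mulRep l hl a b⟩
  one_mem' := by
    refine ⟨Finsupp.single ((0:ℤ), (0:ℕ)) 1, ?_⟩
    rw [toEnd_single]
    simp
  algebraMap_mem' := by
    intro r
    refine ⟨Finsupp.single ((0:ℤ), (0:ℕ)) r, ?_⟩
    rw [toEnd_single]
    simp [Algebra.algebraMap_eq_smul_one]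

theorem exists_rep (l : ℕ) (hl : (l:ℚ) ≠ 0) {P : E K} (hP : P ∈ A1 K l) :
    ∃ f, toEnd K l f = P := by
  have hle : A1 K l ≤ rangeS l hl := by
    rw [A1]
    refine Algebra.adjoin_le ?_
    intro x hx
    rcases hx with hx | hx | hx
    · subst hx
      exact ⟨Finsupp.single ((1:ℤ), (0:ℕ)) 1, by rw [toEnd_single]; simp⟩
    · subst hx
      exact ⟨Finsupp.single ((-1:ℤ), (0:ℕ)) 1, by rw [toEnd_single]; simp⟩
    · rw [Set.mem_singleton_iff] at hx
      subst hx
      exact ⟨Finsupp.single ((0:ℤ), (1:ℕ)) 1, by rw [toEnd_single]; simp⟩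
  exact hle hP

theorem toEnd_rep (l : ℕ) (hl : (l:ℚ) ≠ 0) {P : E K} (hP : P ∈ A1 K l) :
    toEnd K l (rep K l P) = P := by
  rw [rep, dif_pos (exists_rep l hl hP)]
  exact (exists_rep l hl hP).choose_spec

/-! ### Combinatorial analysis of the bracket -/

/-- the `k ≥ 1` part of the product. -/
def hotRep (l : ℕ) (f g : (ℤ × ℕ) →₀ K) : (ℤ × ℕ) →₀ K :=
  f.sum fun p a => g.sum fun q b => ∑ k ∈ range p.2,
    Finsupp.single (eexp l p q (k+1)) (a * b * algebraMap ℚ K (coefk l p q (k+1)))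

/-- the commutative (`k = 0`) part of the product. -/
def convRep (f g : (ℤ × ℕ) →₀ K) : (ℤ × ℕ) →₀ K :=
  f.sum fun p a => g.sum fun q b => Finsupp.single (p.1+q.1, p.2+q.2) (a*b)

theorem mulRep_eq (l : ℕ) (f g : (ℤ × ℕ) →₀ K) :
    mulRep l f g = convRep f g + hotRep l f g := by
  rw [mulRep, convRep, hotRep, ← Finsupp.sum_add]
  refine Finsupp.sum_congr fun p hp => ?_
  rw [← Finsupp.sum_add]
  refine Finsupp.sum_congr fun q hq => ?_
  rw [Finset.sum_range_succ']
  rw [add_comm]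
  congr 1
  have h0 : eexp l p q 0 = (p.1+q.1, p.2+q.2) := by simp [eexp]
  have hc : coefk l p q 0 = 1 := by simp [coefk]
  rw [h0, hc, map_one, mul_one]

theorem convRep_comm (f g : (ℤ × ℕ) →₀ K) : convRep f g = convRep g f := by
  rw [convRep, convRep, Finsupp.sum_comm]
  refine Finsupp.sum_congr fun q hq => ?_
  refine Finsupp.sum_congr fun p hp => ?_
  rw [add_comm q.1, add_comm q.2, mul_comm]

theorem brkRep_eq (l : ℕ) (f g : (ℤ × ℕ) →₀ K) :
    mulRep l f g - mulRep l g f = hotRep l f g - hotRep l g f := by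
  rw [mulRep_eq, mulRep_eq, convRep_comm f g]
  abel

theorem hotRep_apply (l : ℕ) (f g : (ℤ × ℕ) →₀ K) (r : ℤ × ℕ) :
    hotRep l f g r = ∑ p ∈ f.support, ∑ q ∈ g.support, ∑ k ∈ range p.2,
      (if eexp l p q (k+1) = r then f p * g q * algebraMap ℚ K (coefk l p q (k+1)) else 0) := by
  rw [hotRep, Finsupp.sum, Finsupp.finset_sum_apply]
  refine Finset.sum_congr rfl fun p hp => ?_
  rw [Finsupp.sum, Finsupp.finset_sum_apply]
  refine Finset.sum_congr rfl fun q hq => ?_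
  rw [Finsupp.finset_sum_apply]
  refine Finset.sum_congr rfl fun k hk => ?_
  rw [Finsupp.single_apply]

theorem pt_inj {l : ℕ} (hl : (l:ℚ) ≠ 0) : Function.Injective (pt l) := by
  intro p q h
  have h1 : (p.1:ℚ)/(l:ℚ) = (q.1:ℚ)/(l:ℚ) := congrArg Prod.fst h
  have h2 : ((p.2:ℕ):ℚ) = (q.2:ℚ) := congrArg Prod.snd h
  field_simp at h1
  exact Prod.ext (by exact_mod_cast h1) (by exact_mod_cast h2)

theorem vp_pt_eexp (α β : ℤ) {l : ℕ} (hl : (l:ℚ) ≠ 0) (p q : ℤ × ℕ) (k : ℕ)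
    (hk : k ≤ p.2 + q.2) :
    vp α β (pt l (eexp l p q k)) = vp α β (pt l p) + vp α β (pt l q) - k * ((α:ℚ)+(β:ℚ)) := by
  rw [vp, vp, vp, pt, pt, pt, eexp]
  simp only
  rw [Nat.cast_sub hk]
  push_cast
  field_simp
  ring

theorem tie_inj {ρ σ a : ℤ} (hρσ : ((ρ:ℚ)+(σ:ℚ)) ≠ 0) (ha : (a:ℚ) ≠ 0) {u v : ℚ × ℚ}
    (h1 : vp ρ σ u = vp ρ σ v) (h2 : vp a (-a) u = vp a (-a) v) : u = v := by
  rw [vp] at h1 h2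
  rw [vp] at h1 h2
  push_cast at h2
  have e2 : u.1 - u.2 = v.1 - v.2 := by
    have : (a:ℚ) * (u.1 - u.2) = (a:ℚ) * (v.1 - v.2) := by ring_nf; linarith [h2]
    exact mul_left_cancel₀ ha this
  have e1 : u.1 = v.1 := by
    have : ((ρ:ℚ)+(σ:ℚ)) * u.1 = ((ρ:ℚ)+(σ:ℚ)) * v.1 := by linear_combination h1 + (σ:ℚ) * e2
    exact mul_left_cancel₀ hρσ this
  have e22 : u.2 = v.2 := by linear_combination e1 - e2
  exact Prod.ext e1 e22

section Master

variable {ρ σ : ℤ} {l : ℕ}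
variable (f g : (ℤ × ℕ) →₀ K)

theorem hot_support_le (hl : (l:ℚ) ≠ 0) (hρσ : 0 < (ρ:ℚ)+(σ:ℚ)) {pf qf : ℤ × ℕ}
    (hpfmax : ∀ p ∈ f.support, vp ρ σ (pt l p) ≤ vp ρ σ (pt l pf))
    (hqfmax : ∀ q ∈ g.support, vp ρ σ (pt l q) ≤ vp ρ σ (pt l qf))
    (r : ℤ × ℕ)
    (hr : vp ρ σ (pt l pf) + vp ρ σ (pt l qf) - ((ρ:ℚ)+(σ:ℚ)) < vp ρ σ (pt l r)) :
    hotRep l f g r = 0 := by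
  rw [hotRep_apply]
  refine Finset.sum_eq_zero fun p hp => Finset.sum_eq_zero fun q hq =>
    Finset.sum_eq_zero fun k hk => ?_
  rw [if_neg]
  intro he
  have hk1 : k + 1 ≤ p.2 + q.2 := by
    have := Finset.mem_range.mp hk
    omega
  have hlev := vp_pt_eexp ρ σ hl p q (k+1) hk1
  rw [he] at hlev
  have h1 : vp ρ σ (pt l p) ≤ vp ρ σ (pt l pf) := hpfmax p hp
  have h2 : vp ρ σ (pt l q) ≤ vp ρ σ (pt l qf) := hqfmax q hq
  have h3 : (1:ℚ) ≤ ((k+1 : ℕ):ℚ) := by exact_mod_cast Nat.one_le_iff_ne_zero.mpr (Nat.succ_ne_zero k)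
  have hmul := mul_le_mul_of_nonneg_right h3 hρσ.le
  linarith

theorem hot_decomp (hl : (l:ℚ) ≠ 0) (hρσ : 0 < (ρ:ℚ)+(σ:ℚ)) {pf qf : ℤ × ℕ}
    (hpfmax : ∀ p ∈ f.support, vp ρ σ (pt l p) ≤ vp ρ σ (pt l pf))
    (hqfmax : ∀ q ∈ g.support, vp ρ σ (pt l q) ≤ vp ρ σ (pt l qf))
    (r : ℤ × ℕ)
    (hr : vp ρ σ (pt l r) = vp ρ σ (pt l pf) + vp ρ σ (pt l qf) - ((ρ:ℚ)+(σ:ℚ)))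
    (hne : hotRep l f g r ≠ 0) :
    ∃ p ∈ f.support, ∃ q ∈ g.support,
      vp ρ σ (pt l p) = vp ρ σ (pt l pf) ∧ vp ρ σ (pt l q) = vp ρ σ (pt l qf) ∧
      1 ≤ p.2 ∧ eexp l p q 1 = r := by
  rw [hotRep_apply] at hne
  obtain ⟨p, hp, hne⟩ := Finset.exists_ne_zero_of_sum_ne_zero hne
  obtain ⟨q, hq, hne⟩ := Finset.exists_ne_zero_of_sum_ne_zero hne
  obtain ⟨k, hk, hne⟩ := Finset.exists_ne_zero_of_sum_ne_zero hne
  have he : eexp l p q (k+1) = r := by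
    by_contra hc
    rw [if_neg hc] at hne
    exact hne rfl
  have hk1 : k + 1 ≤ p.2 + q.2 := by
    have := Finset.mem_range.mp hk
    omega
  have hlev := vp_pt_eexp ρ σ hl p q (k+1) hk1
  rw [he, hr] at hlev
  have h1 : vp ρ σ (pt l p) ≤ vp ρ σ (pt l pf) := hpfmax p hp
  have h2 : vp ρ σ (pt l q) ≤ vp ρ σ (pt l qf) := hqfmax q hq
  have hk0 : k = 0 := by
    by_contra hk0
    have h3 : (2:ℚ) ≤ ((k+1 : ℕ):ℚ) := by
      have : 2 ≤ k + 1 := by omega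
      exact_mod_cast this
    have hmul := mul_le_mul_of_nonneg_right h3 hρσ.le
    linarith
  subst hk0
  push_cast at hlev
  have hvp : vp ρ σ (pt l p) = vp ρ σ (pt l pf) ∧ vp ρ σ (pt l q) = vp ρ σ (pt l qf) :=
    ⟨by linarith, by linarith⟩
  exact ⟨p, hp, q, hq, hvp.1, hvp.2, by
    have := Finset.mem_range.mp hk
    omega, by simpa using he⟩

theorem hot_at (hl : (l:ℚ) ≠ 0) (hρσ : 0 < (ρ:ℚ)+(σ:ℚ)) {a : ℤ} (ha : (a:ℚ) ≠ 0) {pf qf : ℤ × ℕ}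
    (hpf : pf ∈ f.support) (hqf : qf ∈ g.support)
    (hpfmax : ∀ p ∈ f.support, vp ρ σ (pt l p) ≤ vp ρ σ (pt l pf))
    (hqfmax : ∀ q ∈ g.support, vp ρ σ (pt l q) ≤ vp ρ σ (pt l qf))
    (hpftie : ∀ p ∈ f.support, vp ρ σ (pt l p) = vp ρ σ (pt l pf) →
      vp a (-a) (pt l p) ≤ vp a (-a) (pt l pf))
    (hqftie : ∀ q ∈ g.support, vp ρ σ (pt l q) = vp ρ σ (pt l qf) →
      vp a (-a) (pt l q) ≤ vp a (-a) (pt l qf))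
    (hsum : 1 ≤ pf.2 + qf.2) :
    hotRep l f g (eexp l pf qf 1)
      = f pf * g qf * algebraMap ℚ K ((pf.2:ℚ) * ((qf.1:ℚ)/(l:ℚ))) := by
  have hρσ' : ((ρ:ℚ)+(σ:ℚ)) ≠ 0 := ne_of_gt hρσ
  set r0 := eexp l pf qf 1 with hr0
  have hlevr0 := vp_pt_eexp ρ σ hl pf qf 1 hsum
  -- any nonzero term must be (pf, qf, 0)
  have huniq : ∀ p ∈ f.support, ∀ q ∈ g.support, ∀ k ∈ range p.2,
      eexp l p q (k+1) = r0 → (p = pf ∧ q = qf ∧ k = 0) := by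
    intro p hp q hq k hk he
    have hk1 : k + 1 ≤ p.2 + q.2 := by
      have := Finset.mem_range.mp hk
      omega
    have hlev := vp_pt_eexp ρ σ hl p q (k+1) hk1
    rw [he, hlevr0] at hlev
    push_cast at hlev
    have h1 : vp ρ σ (pt l p) ≤ vp ρ σ (pt l pf) := hpfmax p hp
    have h2 : vp ρ σ (pt l q) ≤ vp ρ σ (pt l qf) := hqfmax q hq
    have hk0 : k = 0 := by
      by_contra hk0
      have h3 : (2:ℚ) ≤ ((k+1 : ℕ):ℚ) := by
        have : 2 ≤ k + 1 := by omega
        exact_mod_cast this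
      have hmul := mul_le_mul_of_nonneg_right h3 hρσ.le
      push_cast at hmul
      linarith
    subst hk0
    norm_num at hlev
    have hvp1 : vp ρ σ (pt l p) = vp ρ σ (pt l pf) := by linarith
    have hvp2 : vp ρ σ (pt l q) = vp ρ σ (pt l qf) := by linarith
    -- tie values
    have htie1 := hpftie p hp hvp1
    have htie2 := hqftie q hq hvp2
    have hwsum : vp a (-a) (pt l p) + vp a (-a) (pt l q)
        = vp a (-a) (pt l pf) + vp a (-a) (pt l qf) := by
      have hA := vp_pt_eexp a (-a) hl p q 1 (by omega)
      have hB := vp_pt_eexp a (-a) hl pf qf 1 hsum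
      rw [he] at hA
      rw [← hr0] at hB
      rw [hA] at hB
      push_cast at hB
      linarith [hB]
    have htie1' : vp a (-a) (pt l p) = vp a (-a) (pt l pf) := by linarith
    have htie2' : vp a (-a) (pt l q) = vp a (-a) (pt l qf) := by linarith
    have hp_eq : p = pf := pt_inj hl (tie_inj hρσ' ha hvp1 htie1')
    have hq_eq : q = qf := pt_inj hl (tie_inj hρσ' ha hvp2 htie2')
    exact ⟨hp_eq, hq_eq, rfl⟩
  rw [hotRep_apply]
  by_cases hpf2 : 1 ≤ pf.2
  · rw [Finset.sum_eq_single_of_mem pf hpf]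
    · rw [Finset.sum_eq_single_of_mem qf hqf]
      · rw [Finset.sum_eq_single_of_mem 0 (Finset.mem_range.mpr hpf2)]
        · rw [if_pos rfl]
          congr 1
          rw [coefk]
          congr 1
          rw [Nat.choose_one_right, ffall_one]
        · intro k hk hkne
          rw [if_neg]
          intro he
          exact hkne (huniq pf hpf qf hqf k hk he).2.2
      · intro q hq hqne
        refine Finset.sum_eq_zero fun k hk => ?_
        rw [if_neg]
        intro he
        exact hqne (huniq pf hpf q hq k hk he).2.1
    · intro p hp hpne
      refine Finset.sum_eq_zero fun q hq => Finset.sum_eq_zero fun k hk => ?_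
      rw [if_neg]
      intro he
      exact hpne (huniq p hp q hq k hk he).1
  · have hz : ((pf.2:ℚ)) = 0 := by
      have : pf.2 = 0 := by omega
      rw [this]; norm_num
    rw [hz, zero_mul, map_zero, mul_zero]
    refine Finset.sum_eq_zero fun p hp => Finset.sum_eq_zero fun q hq =>
      Finset.sum_eq_zero fun k hk => ?_
    rw [if_neg]
    intro he
    have := (huniq p hp q hq k hk he).1
    subst this
    have := Finset.mem_range.mp hk
    omega

end Master

/-! ### Extremal points -/

/-- generic extremal-point predicate (`a = 1`: start point, `a = -1`: end point). -/
def IsExtOf (a : ℤ) (ρ σ : ℤ) (l : ℕ) (P : E K) (q : ℚ × ℚ) : Prop :=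
  q ∈ suppPts K l (ltRep K ρ σ l P) ∧
    ∀ q' ∈ suppPts K l (ltRep K ρ σ l P), vp a (-a) q' ≤ vp a (-a) q

theorem IsStOf_iff {ρ σ : ℤ} {l : ℕ} {P : E K} {s : ℚ × ℚ} :
    IsStOf K ρ σ l P s ↔ IsExtOf 1 ρ σ l P s := Iff.rfl

theorem IsEnOf_iff {ρ σ : ℤ} {l : ℕ} {P : E K} {s : ℚ × ℚ} :
    IsEnOf K ρ σ l P s ↔ IsExtOf (-1) ρ σ l P s := by
  unfold IsEnOf IsExtOf
  norm_num

theorem exists_ext (h : (ℤ × ℕ) →₀ K) (hne : h.support.Nonempty) (v w : ℤ × ℕ → ℚ) :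
    ∃ pf ∈ h.support, (∀ p ∈ h.support, v p ≤ v pf) ∧
      (∀ p ∈ h.support, v p = v pf → w p ≤ w pf) := by
  obtain ⟨pm, hpm, hmax⟩ := Finset.exists_max_image h.support v hne
  obtain ⟨pf, hpfS, hwmax⟩ := Finset.exists_max_image
    (h.support.filter (fun p => v p = v pm)) w
    ⟨pm, Finset.mem_filter.mpr ⟨hpm, rfl⟩⟩
  obtain ⟨hpf, hvpf⟩ := Finset.mem_filter.mp hpfS
  refine ⟨pf, hpf, fun p hp => ?_, fun p hp hv => ?_⟩
  · rw [hvpf]; exact hmax p hp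
  · exact hwmax p (Finset.mem_filter.mpr ⟨hp, hv.trans hvpf⟩)

section DefsBridge

variable {ρ σ : ℤ} {l : ℕ}

theorem vdeg_eq_of {P : E K} {c : ℚ}
    (h1 : ∃ p ∈ (rep K l P).support, vp ρ σ (pt l p) = c)
    (h2 : ∀ p ∈ (rep K l P).support, vp ρ σ (pt l p) ≤ c) :
    vdeg K ρ σ l P = (c : WithBot ℚ) := by
  obtain ⟨p0, hp0, hc⟩ := h1
  apply le_antisymm
  · exact Finset.sup_le fun p hp => WithBot.coe_le_coe.mpr (h2 p hp)
  · rw [← hc]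
    exact Finset.le_sup (f := fun p => ((vp ρ σ (pt l p) : ℚ) : WithBot ℚ)) hp0

theorem ltRep_supp_mem {P : E K} (p : ℤ × ℕ) :
    p ∈ (ltRep K ρ σ l P).support ↔
      p ∈ (rep K l P).support ∧ ((vp ρ σ (pt l p) : ℚ) : WithBot ℚ) = vdeg K ρ σ l P := by
  rw [ltRep, Finsupp.support_filter, Finset.mem_filter]

theorem suppPts_mem {h : (ℤ × ℕ) →₀ K} {s : ℚ × ℚ} :
    s ∈ suppPts K l h ↔ ∃ p ∈ h.support, pt l p = s := by
  rw [suppPts, Set.mem_image]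
  simp

theorem ltRep_level {P : E K} {s s' : ℚ × ℚ}
    (hs : s ∈ suppPts K l (ltRep K ρ σ l P)) (hs' : s' ∈ suppPts K l (ltRep K ρ σ l P)) :
    vp ρ σ s = vp ρ σ s' := by
  obtain ⟨p, hp, rfl⟩ := suppPts_mem.mp hs
  obtain ⟨p', hp', rfl⟩ := suppPts_mem.mp hs'
  have h1 := (ltRep_supp_mem p).mp hp
  have h2 := (ltRep_supp_mem p').mp hp'
  have := h1.2.trans h2.2.symm
  exact_mod_cast this

theorem ext_unique {a : ℤ} (ha : (a:ℚ) ≠ 0) (hρσ' : ((ρ:ℚ)+(σ:ℚ)) ≠ 0) {P : E K}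
    {s1 s2 : ℚ × ℚ} (h1 : IsExtOf a ρ σ l P s1) (h2 : IsExtOf a ρ σ l P s2) : s1 = s2 := by
  have hw1 := h1.2 s2 h2.1
  have hw2 := h2.2 s1 h1.1
  have hw : vp a (-a) s1 = vp a (-a) s2 := le_antisymm hw2 hw1
  have hv : vp ρ σ s1 = vp ρ σ s2 := ltRep_level h1.1 h2.1
  exact tie_inj hρσ' ha hv hw

theorem rep_ne_zero (hl : (l:ℚ) ≠ 0) {P : E K} (hP : P ∈ A1 K l) (hP0 : P ≠ 0) :
    (rep K l P).support.Nonempty := by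
  rw [Finsupp.support_nonempty_iff]
  intro h
  apply hP0
  rw [← toEnd_rep l hl hP, h, map_zero]

theorem extPoint_mem {a : ℤ} (hρσ : 0 < (ρ:ℚ)+(σ:ℚ)) {P : E K} {pf : ℤ × ℕ}
    (hpf : pf ∈ (rep K l P).support)
    (hpfmax : ∀ p ∈ (rep K l P).support, vp ρ σ (pt l p) ≤ vp ρ σ (pt l pf))
    (hpftie : ∀ p ∈ (rep K l P).support, vp ρ σ (pt l p) = vp ρ σ (pt l pf) →
      vp a (-a) (pt l p) ≤ vp a (-a) (pt l pf)) :
    IsExtOf a ρ σ l P (pt l pf) := by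
  have hvdeg : vdeg K ρ σ l P = ((vp ρ σ (pt l pf) : ℚ) : WithBot ℚ) :=
    vdeg_eq_of ⟨pf, hpf, rfl⟩ hpfmax
  constructor
  · exact suppPts_mem.mpr ⟨pf, (ltRep_supp_mem pf).mpr ⟨hpf, by rw [hvdeg]⟩, rfl⟩
  · intro s' hs'
    obtain ⟨p, hp, rfl⟩ := suppPts_mem.mp hs'
    obtain ⟨hps, hplev⟩ := (ltRep_supp_mem p).mp hp
    rw [hvdeg] at hplev
    exact hpftie p hps (by exact_mod_cast hplev)

theorem extPoint_eq {a : ℤ} (ha : (a:ℚ) ≠ 0) (hρσ : 0 < (ρ:ℚ)+(σ:ℚ)) {P : E K} {pf : ℤ × ℕ}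
    (hpf : pf ∈ (rep K l P).support)
    (hpfmax : ∀ p ∈ (rep K l P).support, vp ρ σ (pt l p) ≤ vp ρ σ (pt l pf))
    (hpftie : ∀ p ∈ (rep K l P).support, vp ρ σ (pt l p) = vp ρ σ (pt l pf) →
      vp a (-a) (pt l p) ≤ vp a (-a) (pt l pf))
    {s : ℚ × ℚ} (hs : IsExtOf a ρ σ l P s) : s = pt l pf :=
  ext_unique ha (ne_of_gt hρσ) hs (extPoint_mem hρσ hpf hpfmax hpftie)

theorem stP_eq (hρσ : 0 < (ρ:ℚ)+(σ:ℚ)) {P : E K} {pf : ℤ × ℕ}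
    (hpf : pf ∈ (rep K l P).support)
    (hpfmax : ∀ p ∈ (rep K l P).support, vp ρ σ (pt l p) ≤ vp ρ σ (pt l pf))
    (hpftie : ∀ p ∈ (rep K l P).support, vp ρ σ (pt l p) = vp ρ σ (pt l pf) →
      vp 1 (-1) (pt l p) ≤ vp 1 (-1) (pt l pf)) :
    stP K ρ σ l P = pt l pf := by
  have hmem : IsStOf K ρ σ l P (pt l pf) :=
    IsStOf_iff.mpr (extPoint_mem hρσ hpf hpfmax hpftie)
  rw [stP, dif_pos ⟨pt l pf, hmem⟩]
  exact extPoint_eq (by norm_num) hρσ hpf hpfmax hpftie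
    (IsStOf_iff.mp (⟨pt l pf, hmem⟩ : ∃ q, IsStOf K ρ σ l P q).choose_spec)

theorem enP_eq (hρσ : 0 < (ρ:ℚ)+(σ:ℚ)) {P : E K} {pf : ℤ × ℕ}
    (hpf : pf ∈ (rep K l P).support)
    (hpfmax : ∀ p ∈ (rep K l P).support, vp ρ σ (pt l p) ≤ vp ρ σ (pt l pf))
    (hpftie : ∀ p ∈ (rep K l P).support, vp ρ σ (pt l p) = vp ρ σ (pt l pf) →
      vp (-1) 1 (pt l p) ≤ vp (-1) 1 (pt l pf)) :
    enP K ρ σ l P = pt l pf := by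
  have hpftie' : ∀ p ∈ (rep K l P).support, vp ρ σ (pt l p) = vp ρ σ (pt l pf) →
      vp (-1) (-(-1)) (pt l p) ≤ vp (-1) (-(-1)) (pt l pf) := by
    intro p hp hv
    have := hpftie p hp hv
    rw [vp, vp] at this ⊢
    push_cast at this ⊢
    linarith
  have hmem : IsEnOf K ρ σ l P (pt l pf) :=
    IsEnOf_iff.mpr (extPoint_mem hρσ hpf hpfmax hpftie')
  rw [enP, dif_pos ⟨pt l pf, hmem⟩]
  exact extPoint_eq (by norm_num) hρσ hpf hpfmax hpftie'
    (IsEnOf_iff.mp (⟨pt l pf, hmem⟩ : ∃ q, IsEnOf K ρ σ l P q).choose_spec)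

theorem eexp_comm1 (l : ℕ) (p q : ℤ × ℕ) : eexp l p q 1 = eexp l q p 1 := by
  rw [eexp, eexp]
  refine Prod.ext ?_ ?_ <;> simp only <;> omega

theorem pt_eexp1 (hl : (l:ℚ) ≠ 0) {p q : ℤ × ℕ} (hsum : 1 ≤ p.2 + q.2) :
    pt l (eexp l p q 1) = pt l p + pt l q - (1, 1) := by
  rw [pt, eexp, pt, pt]
  refine Prod.ext ?_ ?_
  · simp only [Prod.fst_sub, Prod.fst_add]
    push_cast
    field_simp
  · simp only [Prod.snd_sub, Prod.snd_add]
    rw [Nat.cast_sub hsum]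
    push_cast
    norm_num

theorem vp_sub_ones (α β : ℤ) (u v : ℚ × ℚ) :
    vp α β (u + v - (1,1)) = vp α β u + vp α β v - ((α:ℚ)+(β:ℚ)) := by
  rw [vp, vp, vp]
  simp only [Prod.fst_sub, Prod.fst_add, Prod.snd_sub, Prod.snd_add]
  ring

end DefsBridge

theorem vp_neg_one (q : ℚ × ℚ) : vp (-1) (-(-1)) q = vp (-1) 1 q := by
  rw [vp, vp]; norm_num

theorem main_ext {ρ σ : ℤ} {l : ℕ} (hl : (l:ℚ) ≠ 0) (hρσ : 0 < (ρ:ℚ)+(σ:ℚ))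
    {a : ℤ} (ha : (a:ℚ) ≠ 0)
    {P Q R : E K} (hP : P ∈ A1 K l) (hQ : Q ∈ A1 K l) (hR : R ∈ A1 K l)
    (hP0 : P ≠ 0) (hQ0 : Q ≠ 0) (hR0 : R ≠ 0)
    (hbr : rsBrk K ρ σ l P Q = ell K ρ σ l R)
    {pf qf : ℤ × ℕ}
    (hpf : pf ∈ (rep K l P).support)
    (hpfmax : ∀ p ∈ (rep K l P).support, vp ρ σ (pt l p) ≤ vp ρ σ (pt l pf))
    (hpftie : ∀ p ∈ (rep K l P).support, vp ρ σ (pt l p) = vp ρ σ (pt l pf) →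
      vp a (-a) (pt l p) ≤ vp a (-a) (pt l pf))
    (hqf : qf ∈ (rep K l Q).support)
    (hqfmax : ∀ q ∈ (rep K l Q).support, vp ρ σ (pt l q) ≤ vp ρ σ (pt l qf))
    (hqftie : ∀ q ∈ (rep K l Q).support, vp ρ σ (pt l q) = vp ρ σ (pt l qf) →
      vp a (-a) (pt l q) ≤ vp a (-a) (pt l qf))
    {sR : ℚ × ℚ} (hsR : IsExtOf a ρ σ l R sR) :
    cross (pt l pf) (pt l qf) ≠ 0 ↔ pt l pf + pt l qf - (1,1) = sR := by
  set f := rep K l P with hf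
  set g := rep K l Q with hg
  set B := hotRep l f g - hotRep l g f with hB
  have hrepbrk : rep K l (brk K P Q) = B := by
    have h1 : brk K P Q = toEnd K l (mulRep l f g - mulRep l g f) := by
      rw [map_sub, toEnd_mulRep l hl, toEnd_mulRep l hl, hf, hg,
        toEnd_rep l hl hP, toEnd_rep l hl hQ, brk]
    rw [h1, brkRep_eq, rep_toEnd l hl]
  set dP := vp ρ σ (pt l pf) with hdP
  set dQ := vp ρ σ (pt l qf) with hdQ
  set c := dP + dQ - ((ρ:ℚ)+(σ:ℚ)) with hc
  have hBapply : ∀ r, B r = hotRep l f g r - hotRep l g f r := fun r => rfl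
  have hbound : ∀ r ∈ B.support, vp ρ σ (pt l r) ≤ c := by
    intro r hr
    by_contra hgt
    push_neg at hgt
    have h1 := hot_support_le f g hl hρσ hpfmax hqfmax r hgt
    have h2 := hot_support_le g f hl hρσ hqfmax hpfmax r (by rw [hc] at hgt; linarith)
    have hz : B r = 0 := by rw [hBapply, h1, h2, sub_zero]
    exact (Finsupp.mem_support_iff.mp hr) hz
  -- `ell R` is nonzero, so P,Q are not proportional
  obtain ⟨pR, hpR, hpRmax⟩ := Finset.exists_max_image (rep K l R).support
    (fun p => vp ρ σ (pt l p)) (rep_ne_zero hl hR hR0)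
  have hvdegR := vdeg_eq_of (P := R) ⟨pR, hpR, rfl⟩ hpRmax
  have hltR : pR ∈ (ltRep K ρ σ l R).support :=
    (ltRep_supp_mem pR).mpr ⟨hpR, by rw [hvdegR]⟩
  have hellR_ne : ell K ρ σ l R ≠ 0 := by
    intro h0
    have h0' : (ltRep K ρ σ l R) = 0 := congrArg AddMonoidAlgebra.coeff h0
    rw [h0'] at hltR
    simp at hltR
  have hnotprop : ¬ Proportional K ρ σ l P Q := by
    intro hprop
    apply hellR_ne
    rw [← hbr, rsBrk, if_pos hprop]
  have hlt_eq : ltRep K ρ σ l (brk K P Q) = ltRep K ρ σ l R := by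
    have h := hbr
    rw [rsBrk, if_neg hnotprop] at h
    exact congrArg AddMonoidAlgebra.coeff h
  by_cases hcross : cross (pt l pf) (pt l qf) = 0
  · simp only [hcross, ne_eq, not_true_eq_false, false_iff]
    intro hEq
    have hsRsupp : sR ∈ suppPts K l (ltRep K ρ σ l R) := hsR.1
    rw [← hEq, ← hlt_eq] at hsRsupp
    obtain ⟨r, hrlt, hptr⟩ := suppPts_mem.mp hsRsupp
    by_cases hsum : 1 ≤ pf.2 + qf.2
    · have hSpt : pt l r = pt l (eexp l pf qf 1) := by rw [hptr, pt_eexp1 hl hsum]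
      have hr_eq : r = eexp l pf qf 1 := pt_inj hl hSpt
      obtain ⟨hrB, _⟩ := (ltRep_supp_mem r).mp hrlt
      rw [hrepbrk] at hrB
      apply Finsupp.mem_support_iff.mp hrB
      have hot2 : hotRep l g f r = g qf * f pf * algebraMap ℚ K ((qf.2:ℚ) * ((pf.1:ℚ)/(l:ℚ))) := by
        rw [hr_eq, eexp_comm1 l pf qf]
        exact hot_at g f hl hρσ ha hqf hpf hqfmax hpfmax hqftie hpftie (by omega)
      have hot1 : hotRep l f g r = f pf * g qf * algebraMap ℚ K ((pf.2:ℚ) * ((qf.1:ℚ)/(l:ℚ))) := by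
        rw [hr_eq]
        exact hot_at f g hl hρσ ha hpf hqf hpfmax hqfmax hpftie hqftie hsum
      rw [hBapply, hot1, hot2]
      have hx : (pf.2:ℚ) * ((qf.1:ℚ)/(l:ℚ)) = (qf.2:ℚ) * ((pf.1:ℚ)/(l:ℚ)) := by
        rw [cross] at hcross
        have h1 : (pt l pf).1 = (pf.1:ℚ)/(l:ℚ) := rfl
        have h2 : (pt l pf).2 = (pf.2:ℚ) := rfl
        have h3 : (pt l qf).1 = (qf.1:ℚ)/(l:ℚ) := rfl
        have h4 : (pt l qf).2 = (qf.2:ℚ) := rfl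
        rw [h1, h2, h3, h4] at hcross
        linarith [sub_eq_zero.mp hcross]
      rw [hx]
      ring
    · have h20 : pf.2 = 0 := by omega
      have h21 : qf.2 = 0 := by omega
      have hsnd : (pt l pf + pt l qf - ((1:ℚ),(1:ℚ))).2 = -1 := by
        rw [Prod.snd_sub, Prod.snd_add]
        have e1 : (pt l pf).2 = ((pf.2:ℕ):ℚ) := rfl
        have e2 : (pt l qf).2 = ((qf.2:ℕ):ℚ) := rfl
        rw [e1, e2, h20, h21]
        norm_num
      have hsnd2 : (pt l r).2 = ((r.2:ℕ):ℚ) := rfl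
      have : ((r.2:ℕ):ℚ) = -1 := by rw [← hsnd2, hptr, hsnd]
      have hnn : (0:ℚ) ≤ ((r.2:ℕ):ℚ) := Nat.cast_nonneg r.2
      linarith
  · refine ⟨fun _ => ?_, fun _ => hcross⟩
    have hsum : 1 ≤ pf.2 + qf.2 := by
      by_contra hs
      push_neg at hs
      have h20 : pf.2 = 0 := by omega
      have h21 : qf.2 = 0 := by omega
      apply hcross
      rw [cross]
      have h1 : (pt l pf).2 = ((pf.2:ℕ):ℚ) := rfl
      have h2 : (pt l qf).2 = ((qf.2:ℕ):ℚ) := rfl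
      rw [h1, h2, h20, h21]
      norm_num
    set r0 := eexp l pf qf 1 with hr0
    have hot1 : hotRep l f g r0 = f pf * g qf * algebraMap ℚ K ((pf.2:ℚ) * ((qf.1:ℚ)/(l:ℚ))) :=
      hot_at f g hl hρσ ha hpf hqf hpfmax hqfmax hpftie hqftie hsum
    have hot2 : hotRep l g f r0 = g qf * f pf * algebraMap ℚ K ((qf.2:ℚ) * ((pf.1:ℚ)/(l:ℚ))) := by
      rw [hr0, eexp_comm1 l pf qf]
      exact hot_at g f hl hρσ ha hqf hpf hqfmax hpfmax hqftie hpftie (by omega)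
    have hBr0 : B r0 = f pf * g qf *
        algebraMap ℚ K (-(cross (pt l pf) (pt l qf))) := by
      rw [hBapply, hot1, hot2]
      have hre : f pf * g qf * algebraMap ℚ K ((pf.2:ℚ) * ((qf.1:ℚ)/(l:ℚ)))
          - g qf * f pf * algebraMap ℚ K ((qf.2:ℚ) * ((pf.1:ℚ)/(l:ℚ)))
          = f pf * g qf * (algebraMap ℚ K ((pf.2:ℚ) * ((qf.1:ℚ)/(l:ℚ)))
            - algebraMap ℚ K ((qf.2:ℚ) * ((pf.1:ℚ)/(l:ℚ)))) := by ring
      rw [hre, ← map_sub]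
      congr 1
      rw [cross]
      have h1 : (pt l pf).1 = (pf.1:ℚ)/(l:ℚ) := rfl
      have h2 : (pt l pf).2 = ((pf.2:ℕ):ℚ) := rfl
      have h3 : (pt l qf).1 = (qf.1:ℚ)/(l:ℚ) := rfl
      have h4 : (pt l qf).2 = ((qf.2:ℕ):ℚ) := rfl
      rw [h1, h2, h3, h4]
      ring
    have halg : algebraMap ℚ K (-(cross (pt l pf) (pt l qf))) ≠ 0 := by
      intro h0
      apply hcross
      have h0' : (-(cross (pt l pf) (pt l qf))) = 0 := by
        apply RingHom.injective (algebraMap ℚ K)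
        rw [h0, map_zero]
      linarith
    have hBr0ne : B r0 ≠ 0 := by
      rw [hBr0]
      exact mul_ne_zero (mul_ne_zero (Finsupp.mem_support_iff.mp hpf)
        (Finsupp.mem_support_iff.mp hqf)) halg
    have hlevr0 : vp ρ σ (pt l r0) = c := by
      rw [hr0, vp_pt_eexp ρ σ hl pf qf 1 hsum]
      push_cast
      rw [hc, hdP, hdQ]
      ring
    have hr0mem : r0 ∈ B.support := Finsupp.mem_support_iff.mpr hBr0ne
    have hvdegbrk : vdeg K ρ σ l (brk K P Q) = (c : WithBot ℚ) :=
      vdeg_eq_of ⟨r0, by rw [hrepbrk]; exact hr0mem, hlevr0⟩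
        (fun p hp => hbound p (by rwa [hrepbrk] at hp))
    have hr0lt : r0 ∈ (ltRep K ρ σ l (brk K P Q)).support :=
      (ltRep_supp_mem r0).mpr ⟨by rw [hrepbrk]; exact hr0mem, by rw [hvdegbrk, hlevr0]⟩
    have hSpt : pt l r0 = pt l pf + pt l qf - (1,1) := pt_eexp1 hl hsum
    have hmemSpt : (pt l pf + pt l qf - ((1:ℚ),(1:ℚ))) ∈ suppPts K l (ltRep K ρ σ l R) := by
      rw [← hlt_eq]
      exact suppPts_mem.mpr ⟨r0, hr0lt, hSpt⟩
    have hmax : ∀ s' ∈ suppPts K l (ltRep K ρ σ l R),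
        vp a (-a) s' ≤ vp a (-a) (pt l pf + pt l qf - ((1:ℚ),(1:ℚ))) := by
      intro s' hs'
      rw [← hlt_eq] at hs'
      obtain ⟨r, hrlt, rfl⟩ := suppPts_mem.mp hs'
      obtain ⟨hrB, hrlev⟩ := (ltRep_supp_mem r).mp hrlt
      rw [hrepbrk] at hrB
      rw [hvdegbrk] at hrlev
      have hrlev' : vp ρ σ (pt l r) = c := by exact_mod_cast hrlev
      have hBne : B r ≠ 0 := Finsupp.mem_support_iff.mp hrB
      have hor : hotRep l f g r ≠ 0 ∨ hotRep l g f r ≠ 0 := by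
        by_contra hno
        push_neg at hno
        apply hBne
        rw [hBapply, hno.1, hno.2, sub_zero]
      have hkey : ∃ p ∈ f.support, ∃ q ∈ g.support,
          vp ρ σ (pt l p) = dP ∧ vp ρ σ (pt l q) = dQ ∧ 1 ≤ p.2 + q.2 ∧ eexp l p q 1 = r := by
        rcases hor with h | h
        · obtain ⟨p, hp, q, hq, e1, e2, e3, e4⟩ :=
            hot_decomp f g hl hρσ hpfmax hqfmax r (by rw [hrlev', hc]) h
          exact ⟨p, hp, q, hq, e1, e2, by omega, e4⟩
        · obtain ⟨p, hp, q, hq, e1, e2, e3, e4⟩ :=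
            hot_decomp g f hl hρσ hqfmax hpfmax r (by rw [hrlev', hc]; ring) h
          exact ⟨q, hq, p, hp, e2, e1, by omega, by rw [← e4]; exact (eexp_comm1 l q p)⟩
      obtain ⟨p, hpmem, q, hqmem, e1, e2, e3, e4⟩ := hkey
      have hw1 := hpftie p hpmem e1
      have hw2 := hqftie q hqmem e2
      rw [← e4, vp_pt_eexp a (-a) hl p q 1 e3, vp_sub_ones]
      push_cast
      linarith
    exact ext_unique ha (ne_of_gt hρσ) ⟨hmemSpt, hmax⟩ hsR

end Aux

end Dixmier

namespace Dixmier

theorem rsBracket_st_en (K : Type*) [Field K] [CharZero K] (l : ℕ) (hl : 0 < l)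
    (ρ σ : ℤ) (h0 : V0 ρ σ) (P Q R : E K)
    (hP : P ∈ A1 K l) (hQ : Q ∈ A1 K l) (hR : R ∈ A1 K l)
    (hP0 : P ≠ 0) (hQ0 : Q ≠ 0) (hR0 : R ≠ 0)
    (hbr : rsBrk K ρ σ l P Q = ell K ρ σ l R) :
    (cross (stP K ρ σ l P) (stP K ρ σ l Q) ≠ 0 ↔
      stP K ρ σ l P + stP K ρ σ l Q - (1, 1) = stP K ρ σ l R) ∧
    (cross (enP K ρ σ l P) (enP K ρ σ l Q) ≠ 0 ↔
      enP K ρ σ l P + enP K ρ σ l Q - (1, 1) = enP K ρ σ l R) := by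
  have hρσ : 0 < (ρ:ℚ)+(σ:ℚ) := by exact_mod_cast h0.1.2
  have hlQ : ((l:ℕ):ℚ) ≠ 0 := by
    have : (0:ℚ) < (l:ℚ) := by exact_mod_cast hl
    linarith
  constructor
  · obtain ⟨pf, hpf, hpfmax, hpftie⟩ := exists_ext (rep K l P) (rep_ne_zero hlQ hP hP0)
      (fun p => vp ρ σ (pt l p)) (fun p => vp 1 (-1) (pt l p))
    obtain ⟨qf, hqf, hqfmax, hqftie⟩ := exists_ext (rep K l Q) (rep_ne_zero hlQ hQ hQ0)
      (fun p => vp ρ σ (pt l p)) (fun p => vp 1 (-1) (pt l p))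
    have hstP := stP_eq hρσ hpf hpfmax hpftie
    have hstQ := stP_eq hρσ hqf hqfmax hqftie
    have hExR : ∃ q, IsStOf K ρ σ l R q := by
      obtain ⟨pR, hpR, hmaxR, htieR⟩ := exists_ext (rep K l R) (rep_ne_zero hlQ hR hR0)
        (fun p => vp ρ σ (pt l p)) (fun p => vp 1 (-1) (pt l p))
      exact ⟨pt l pR, IsStOf_iff.mpr (extPoint_mem hρσ hpR hmaxR htieR)⟩
    have hsR : IsExtOf 1 ρ σ l R (stP K ρ σ l R) := by
      rw [stP, dif_pos hExR]
      exact IsStOf_iff.mp hExR.choose_spec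
    rw [hstP, hstQ]
    exact main_ext hlQ hρσ (by norm_num : ((1:ℤ):ℚ) ≠ 0) hP hQ hR hP0 hQ0 hR0 hbr
      hpf hpfmax hpftie hqf hqfmax hqftie hsR
  · obtain ⟨pf, hpf, hpfmax, hpftie⟩ := exists_ext (rep K l P) (rep_ne_zero hlQ hP hP0)
      (fun p => vp ρ σ (pt l p)) (fun p => vp (-1) 1 (pt l p))
    obtain ⟨qf, hqf, hqfmax, hqftie⟩ := exists_ext (rep K l Q) (rep_ne_zero hlQ hQ hQ0)
      (fun p => vp ρ σ (pt l p)) (fun p => vp (-1) 1 (pt l p))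
    have henP := enP_eq hρσ hpf hpfmax hpftie
    have henQ := enP_eq hρσ hqf hqfmax hqftie
    have hpftie' : ∀ p ∈ (rep K l P).support, vp ρ σ (pt l p) = vp ρ σ (pt l pf) →
        vp (-1) (-(-1)) (pt l p) ≤ vp (-1) (-(-1)) (pt l pf) := fun p hp hv => by
      rw [vp_neg_one, vp_neg_one]; exact hpftie p hp hv
    have hqftie' : ∀ q ∈ (rep K l Q).support, vp ρ σ (pt l q) = vp ρ σ (pt l qf) →
        vp (-1) (-(-1)) (pt l q) ≤ vp (-1) (-(-1)) (pt l qf) := fun q hq hv => by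
      rw [vp_neg_one, vp_neg_one]; exact hqftie q hq hv
    have hExR : ∃ q, IsEnOf K ρ σ l R q := by
      obtain ⟨pR, hpR, hmaxR, htieR⟩ := exists_ext (rep K l R) (rep_ne_zero hlQ hR hR0)
        (fun p => vp ρ σ (pt l p)) (fun p => vp (-1) 1 (pt l p))
      have htieR' : ∀ p ∈ (rep K l R).support, vp ρ σ (pt l p) = vp ρ σ (pt l pR) →
          vp (-1) (-(-1)) (pt l p) ≤ vp (-1) (-(-1)) (pt l pR) := fun p hp hv => by
        rw [vp_neg_one, vp_neg_one]; exact htieR p hp hv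
      exact ⟨pt l pR, IsEnOf_iff.mpr (extPoint_mem hρσ hpR hmaxR htieR')⟩
    have hsR : IsExtOf (-1) ρ σ l R (enP K ρ σ l R) := by
      rw [enP, dif_pos hExR]
      exact IsEnOf_iff.mp hExR.choose_spec
    rw [henP, henQ]
    exact main_ext hlQ hρσ (by norm_num : (((-1):ℤ):ℚ) ≠ 0) hP hQ hR hP0 hQ0 hR0 hbr
      hpf hpfmax hpftie' hqf hqfmax hqftie' hsR

end Dixmier
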